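/- Let C be an F_q-linear code of length n and dimension k with q = r^h, and let Tr: C^⊥ → F_r^n denote the componentwise trace map restricted to the dual code C^⊥. Then dim_{F_r}(C ∩ F_r^n) = n - h(n - k) + dim_{F_r} ker(Tr). (Véron's dimension formula) -/

import Mathlib

/-- The subfield subcode `C ∩ F_r^n` of an `F_q`-linear code, as an `F_r`-linear code. -/
def subfieldSubcode (Fr Fq : Type) [Field Fr] [Field Fq] [Algebra Fr Fq] (n : ℕ)
    (C : Submodule Fq (Fin n → Fq)) : Submodule Fr (Fin n → Fr) where
  carrier := {v | (fun i => algebraMap Fr Fq (v i)) ∈ C}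
  add_mem' := by
    intro a b ha hb
    have h : (fun i => algebraMap Fr Fq ((a + b) i))
        = (fun i => algebraMap Fr Fq (a i)) + (fun i => algebraMap Fr Fq (b i)) := by
      funext i; simp
    simp only [Set.mem_setOf_eq, h]
    exact C.add_mem ha hb
  zero_mem' := by
    have h : (fun i => algebraMap Fr Fq ((0 : Fin n → Fr) i)) = (0 : Fin n → Fq) := by
      funext i; simp
    simp only [Set.mem_setOf_eq, h]
    exact C.zero_mem
  smul_mem' := by
    intro r v hv
    have h : (fun i => algebraMap Fr Fq ((r • v) i))
        = algebraMap Fr Fq r • (fun i => algebraMap Fr Fq (v i)) := by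
      funext i; simp [Algebra.smul_def]
    simp only [Set.mem_setOf_eq, h]
    exact C.smul_mem _ hv

/-- The dual code of a linear code with respect to the standard bilinear form. -/
def dualCode (K : Type) [Field K] (n : ℕ) (C : Submodule K (Fin n → K)) :
    Submodule K (Fin n → K) where
  carrier := {x | ∀ c ∈ C, ∑ i, x i * c i = 0}
  add_mem' := by
    intro a b ha hb c hc
    simp [Pi.add_apply, add_mul, Finset.sum_add_distrib, ha c hc, hb c hc]
  zero_mem' := by simp
  smul_mem' := by
    intro r x hx c hc
    simp [Pi.smul_apply, smul_eq_mul, mul_assoc, ← Finset.mul_sum, hx c hc]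

/-- The componentwise trace map restricted to the dual code, as an `F_r`-linear map. -/
noncomputable def traceMapOnDual (Fr Fq : Type) [Field Fr] [Field Fq] [Algebra Fr Fq] (n : ℕ)
    (C : Submodule Fq (Fin n → Fq)) :
    (Submodule.restrictScalars Fr (dualCode Fq n C)) →ₗ[Fr] (Fin n → Fr) where
  toFun c := fun i => Algebra.trace Fr Fq (c.1 i)
  map_add' := by intro a b; funext i; simp
  map_smul' := by intro r a; funext i; simp


section Aux

variable (K : Type) [Field K] (n : ℕ)

/-- Evaluation map sending `x` to the functional `c ↦ ∑ x i * c i` on `C`. -/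
def evalMapAux (C : Submodule K (Fin n → K)) : (Fin n → K) →ₗ[K] Module.Dual K C where
  toFun x :=
    { toFun := fun c => ∑ i, x i * c.1 i
      map_add' := by intro a b; simp [mul_add, Finset.sum_add_distrib]
      map_smul' := by
        intro a c
        simp [Finset.mul_sum, mul_left_comm] }
  map_add' := by
    intro a b; ext c; simp [add_mul, Finset.sum_add_distrib]
  map_smul' := by
    intro a x; ext c; simp [Finset.mul_sum, mul_assoc]

lemma evalMapAux_surjective (C : Submodule K (Fin n → K)) :
    Function.Surjective (evalMapAux K n C) := by
  intro φ
  obtain ⟨ψ, hψ⟩ := LinearMap.exists_extend φ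
  refine ⟨fun i => ψ (Pi.single i 1), ?_⟩
  ext c
  have hc : (c : Fin n → K) = ∑ i, Pi.single i (c.1 i) := (Finset.univ_sum_single c.1).symm
  have : ψ c.1 = ∑ i, c.1 i * ψ (Pi.single i 1) := by
    conv_lhs => rw [hc]
    rw [map_sum]
    refine Finset.sum_congr rfl fun i _ => ?_
    have : Pi.single i (c.1 i) = c.1 i • (Pi.single i (1 : K) : Fin n → K) := by
      rw [← Pi.single_smul, smul_eq_mul, mul_one]
    rw [this, map_smul, smul_eq_mul]
  have hφ : φ c = ψ c.1 := by
    conv_lhs => rw [← hψ]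
    rfl
  simp only [evalMapAux, LinearMap.coe_mk, AddHom.coe_mk]
  rw [hφ, this]
  exact Finset.sum_congr rfl fun i _ => mul_comm _ _

lemma ker_evalMapAux (C : Submodule K (Fin n → K)) :
    LinearMap.ker (evalMapAux K n C) = dualCode K n C := by
  ext x
  constructor
  · intro hx c hc
    have := LinearMap.congr_fun (LinearMap.mem_ker.mp hx) ⟨c, hc⟩
    simpa [evalMapAux] using this
  · intro hx
    rw [LinearMap.mem_ker]
    ext c
    simpa [evalMapAux] using hx c.1 c.2

lemma finrank_dualCode (C : Submodule K (Fin n → K)) :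
    Module.finrank K (dualCode K n C) = n - Module.finrank K C := by
  have h1 := LinearMap.finrank_range_add_finrank_ker (evalMapAux K n C)
  rw [LinearMap.range_eq_top.mpr (evalMapAux_surjective K n C), ker_evalMapAux,
    finrank_top, Subspace.dual_finrank_eq, Module.finrank_fin_fun] at h1
  omega

lemma finrank_le_n (C : Submodule K (Fin n → K)) : Module.finrank K C ≤ n := by
  have := Submodule.finrank_le C
  rwa [Module.finrank_fin_fun] at this

lemma dualCode_dualCode (C : Submodule K (Fin n → K)) :
    dualCode K n (dualCode K n C) = C := by
  have hle : C ≤ dualCode K n (dualCode K n C) := by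
    intro c hc x hx
    rw [show ∑ i, c i * x i = ∑ i, x i * c i from Finset.sum_congr rfl fun i _ => mul_comm _ _]
    exact hx c hc
  refine (Submodule.eq_of_le_of_finrank_le hle ?_).symm
  rw [finrank_dualCode, finrank_dualCode]
  have := finrank_le_n K n C
  omega

end Aux
section Delsarte

variable (Fr Fq : Type) [Field Fr] [Field Fq] [Fintype Fr] [Fintype Fq] [Algebra Fr Fq]
  (n : ℕ) (C : Submodule Fq (Fin n → Fq))

lemma subfieldSubcode_eq_dual_range :
    subfieldSubcode Fr Fq n C
      = dualCode Fr n (LinearMap.range (traceMapOnDual Fr Fq n C)) := by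
  have := Finite.of_fintype Fq
  ext v
  constructor
  · intro hv t ht
    obtain ⟨w, rfl⟩ := ht
    have key : ∀ i, v i * Algebra.trace Fr Fq (w.1 i)
        = Algebra.trace Fr Fq (algebraMap Fr Fq (v i) * w.1 i) := by
      intro i
      rw [← Algebra.smul_def, map_smul, smul_eq_mul]
    have hsum : ∑ i, v i * (traceMapOnDual Fr Fq n C w) i
        = Algebra.trace Fr Fq (∑ i, algebraMap Fr Fq (v i) * w.1 i) := by
      rw [map_sum]
      exact Finset.sum_congr rfl fun i _ => key i
    have hw : (w : Fin n → Fq) ∈ dualCode Fq n C := w.2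
    have h0 : ∑ i, algebraMap Fr Fq (v i) * w.1 i = 0 := by
      rw [show ∑ i, algebraMap Fr Fq (v i) * w.1 i
          = ∑ i, w.1 i * algebraMap Fr Fq (v i) from
        Finset.sum_congr rfl fun i _ => mul_comm _ _]
      exact hw _ hv
    show ∑ i, v i * (traceMapOnDual Fr Fq n C w) i = 0
    rw [hsum, h0, map_zero]
  · intro hv
    show (fun i => algebraMap Fr Fq (v i)) ∈ C
    rw [← dualCode_dualCode Fq n C]
    intro w hw
    set s := ∑ i, algebraMap Fr Fq (v i) * w i with hs
    have key : ∀ a : Fq, Algebra.trace Fr Fq (s * a) = 0 := by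
      intro a
      have haw : a • w ∈ Submodule.restrictScalars Fr (dualCode Fq n C) :=
        Submodule.smul_mem _ a hw
      have h1 := hv (traceMapOnDual Fr Fq n C ⟨a • w, haw⟩)
        ⟨⟨a • w, haw⟩, rfl⟩
      have h2 : ∑ i, v i * (traceMapOnDual Fr Fq n C ⟨a • w, haw⟩) i
          = Algebra.trace Fr Fq (s * a) := by
        have : ∀ i, v i * Algebra.trace Fr Fq ((a • w) i)
            = Algebra.trace Fr Fq (algebraMap Fr Fq (v i) * (a * w i)) := by
          intro i
          rw [← Algebra.smul_def, map_smul, smul_eq_mul]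
          rfl
        calc ∑ i, v i * (traceMapOnDual Fr Fq n C ⟨a • w, haw⟩) i
            = ∑ i, Algebra.trace Fr Fq (algebraMap Fr Fq (v i) * (a * w i)) :=
              Finset.sum_congr rfl fun i _ => this i
          _ = Algebra.trace Fr Fq (∑ i, algebraMap Fr Fq (v i) * (a * w i)) :=
              (map_sum _ _ _).symm
          _ = Algebra.trace Fr Fq (s * a) := by
              rw [hs, Finset.sum_mul]
              congr 1
              exact Finset.sum_congr rfl fun i _ => by ring
      rw [← h2, h1]
    have hs0 : s = 0 := (traceForm_nondegenerate Fr Fq).1 s key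
    exact hs0

end Delsarte

/-- Véron's dimension formula:
`dim_{F_r}(C ∩ F_r^n) = n - h (n - k) + dim_{F_r} ker (Tr : C^⊥ → F_r^n)`. -/
theorem veron_dimension_formula
    (r h n k : ℕ) (hh : 1 ≤ h) (hpp : ∃ p m : ℕ, p.Prime ∧ 0 < m ∧ r = p ^ m)
    (Fr Fq : Type) [Field Fr] [Field Fq] [Fintype Fr] [Fintype Fq] [Algebra Fr Fq]
    (hcr : Fintype.card Fr = r) (hcq : Fintype.card Fq = r ^ h)
    (C : Submodule Fq (Fin n → Fq)) (hk : Module.finrank Fq C = k) :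
    (Module.finrank Fr (subfieldSubcode Fr Fq n C) : ℤ)
      = (n : ℤ) - h * (n - k)
        + Module.finrank Fr (LinearMap.ker (traceMapOnDual Fr Fq n C)) := by
  have hfr : Module.finrank Fr Fq = h := by
    have hc := Module.card_eq_pow_finrank (K := Fr) (V := Fq)
    rw [hcr, hcq] at hc
    obtain ⟨p, m, hp, hm, rfl⟩ := hpp
    have hr2 : 2 ≤ p ^ m := (Nat.one_lt_pow (by omega) hp.one_lt)
    exact (Nat.pow_right_injective hr2 hc.symm)
  have hkn : k ≤ n := hk ▸ finrank_le_n Fq n C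
  set D := Submodule.restrictScalars Fr (dualCode Fq n C) with hDdef
  set T := LinearMap.range (traceMapOnDual Fr Fq n C) with hTdef
  have hDr : Module.finrank Fr D = h * (n - k) := by
    have e : D ≃ₗ[Fr] (dualCode Fq n C) :=
      (Submodule.restrictScalarsEquiv Fr (p := dualCode Fq n C)).restrictScalars Fr
    rw [e.finrank_eq, ← Module.finrank_mul_finrank Fr Fq (dualCode Fq n C),
      hfr, finrank_dualCode, hk]
  have hrn : Module.finrank Fr T + Module.finrank Fr
      (LinearMap.ker (traceMapOnDual Fr Fq n C)) = h * (n - k) := by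
    rw [← hDr]
    exact LinearMap.finrank_range_add_finrank_ker (traceMapOnDual Fr Fq n C)
  have hTn : Module.finrank Fr T ≤ n := finrank_le_n Fr n T
  have hsub : Module.finrank Fr (subfieldSubcode Fr Fq n C)
      = n - Module.finrank Fr T := by
    rw [subfieldSubcode_eq_dual_range, finrank_dualCode]
  have hcast : (h : ℤ) * ((n : ℤ) - (k : ℤ)) = ((h * (n - k) : ℕ) : ℤ) := by
    push_cast [Nat.cast_sub hkn]
    ring
  rw [hsub, hcast]
  omega
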